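/- Let G be a finite group and A a finite set of size q ≥ 2. Then the following are equivalent: (1) for every x ∈ A^G and every y in the G-orbit of x, there exists a bijective G-equivariant transformation τ : A^G → A^G with τ(x) = y; (2) every subgroup of G is normal (G is a Dedekind group). -/
import Mathlib


variable {G A : Type*}

/-- The right shift action of `G` on configurations `A^G`: `(x · g) h = x (h * g⁻¹)`. -/
def shift [Group G] (x : G → A) (g : G) : G → A := fun h => x (h * g⁻¹)

/-- A transformation of the configuration space is `G`-equivariant if it commutes
with the shift action. -/
def equivariant [Group G] (τ : (G → A) → (G → A)) : Prop :=
  ∀ (x : G → A) (g : G), τ (shift x g) = shift (τ x) g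

/-- The `G`-orbit of a configuration. -/
def orbit [Group G] (x : G → A) : Set (G → A) := Set.range (shift x)

/-- The stabilizer of a configuration, as a subgroup of `G`. -/
def stab [Group G] (x : G → A) : Subgroup G where
  carrier := {g : G | shift x g = x}
  one_mem' := by
    show shift x 1 = x
    funext h
    simp [shift]
  mul_mem' := by
    intro a b ha hb
    have ha' : shift x a = x := ha
    have hb' : shift x b = x := hb
    show shift x (a * b) = x
    funext h
    show x (h * (a * b)⁻¹) = x h
    have key : h * (a * b)⁻¹ = h * b⁻¹ * a⁻¹ := by group
    rw [key]
    have h1 := congrFun ha' (h * b⁻¹)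
    have h2 := congrFun hb' h
    simp only [shift] at h1 h2
    rw [h1, h2]
  inv_mem' := by
    intro a ha
    have ha' : shift x a = x := ha
    show shift x a⁻¹ = x
    funext h
    show x (h * a⁻¹⁻¹) = x h
    rw [inv_inv]
    have h1 := congrFun ha' (h * a)
    simp only [shift] at h1
    rw [mul_inv_cancel_right] at h1
    exact h1.symm

/-- Two subgroups `H`, `K` of `G` are conjugate, namely `K = g⁻¹ * H * g` for some `g ∈ G`. -/
def conjSub [Group G] (H K : Subgroup G) : Prop :=
  ∃ g : G, ∀ a : G, a ∈ K ↔ g * a * g⁻¹ ∈ H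


section Aux

variable [Group G]

lemma shift_one' (x : G → A) : shift x 1 = x := by
  funext h; simp [shift]

lemma shift_shift' (x : G → A) (g h : G) : shift (shift x g) h = shift x (g * h) := by
  funext k; simp [shift, mul_inv_rev, mul_assoc]

lemma shift_eq_iff' (x : G → A) (a b : G) :
    shift x a = shift x b ↔ shift x (a * b⁻¹) = x := by
  constructor
  · intro h
    have := congrArg (fun u => shift u b⁻¹) h
    simpa [shift_shift', shift_one'] using this
  · intro h
    have := congrArg (fun u => shift u b) h
    simpa [shift_shift', inv_mul_cancel_right] using this

lemma mem_stab_iff' (x : G → A) (k : G) : k ∈ stab x ↔ shift x k = x := Iff.rfl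

noncomputable def trans' (x : G → A) (c : G) (z : G → A) : G → A :=
  @dite _ (z ∈ orbit x) (Classical.dec _)
    (fun hz => shift x (c * Classical.choose hz)) (fun _ => z)

lemma trans'_orbit (x : G → A) (c : G)
    (hkey : ∀ h h' : G, shift x h = shift x h' → shift x (c * h) = shift x (c * h'))
    (h : G) : trans' x c (shift x h) = shift x (c * h) := by
  have hz : shift x h ∈ orbit x := ⟨h, rfl⟩
  rw [trans', dif_pos hz]
  exact hkey _ _ (Classical.choose_spec hz)

lemma trans'_not (x : G → A) (c : G) (z : G → A) (hz : z ∉ orbit x) :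
    trans' x c z = z := by
  rw [trans', dif_neg hz]

lemma orbit_shift_mem (x z : G → A) (k : G) (hz : z ∈ orbit x) : shift z k ∈ orbit x := by
  obtain ⟨m, rfl⟩ := hz
  exact ⟨m * k, (shift_shift' x m k).symm⟩

lemma orbit_shift_not_mem (x z : G → A) (k : G) (hz : z ∉ orbit x) : shift z k ∉ orbit x := by
  intro hmem
  apply hz
  have := orbit_shift_mem x _ k⁻¹ hmem
  simpa [shift_shift', shift_one'] using this

end Aux

/-- the group of bijective `G`-equivariant transformations of `A^G`
is transitive on every `G`-orbit iff every subgroup of `G` is normal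
(`G` is a Dedekind group). -/
theorem transitive_on_orbits_iff_dedekind [Group G] [Fintype G] [Fintype A]
    (hq : 2 ≤ Fintype.card A) :
    (∀ x : G → A, ∀ y ∈ orbit x,
        ∃ τ : (G → A) → (G → A), Function.Bijective τ ∧ equivariant τ ∧ τ x = y) ↔
      (∀ H : Subgroup G, H.Normal) := by
  constructor
  · -- transitivity implies Dedekind
    intro hT H
    constructor
    intro n hn g
    obtain ⟨a, b, hab⟩ : ∃ a b : A, a ≠ b := by
      have : 1 < Fintype.card A := by omega
      exact Fintype.one_lt_card_iff.mp this
    classical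
    set x : G → A := fun h => if h ∈ H then a else b with hxdef
    have hstab : ∀ k, k ∈ stab x ↔ k ∈ H := by
      intro k
      rw [mem_stab_iff']
      constructor
      · intro hk
        have h1 := congrFun hk 1
        simp only [shift, one_mul] at h1
        by_contra hkH
        have hk' : k⁻¹ ∉ H := fun hm => hkH (by simpa using H.inv_mem hm)
        rw [hxdef] at h1
        simp only [if_neg hk', if_pos H.one_mem] at h1
        exact hab h1.symm
      · intro hk
        funext h
        show x (h * k⁻¹) = x h
        rw [hxdef]
        simp only
        rw [if_congr (mul_mem_cancel_right (H.inv_mem hk)) rfl rfl]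
    obtain ⟨τ, hbij, hequiv, hτx⟩ := hT x (shift x g) ⟨g, rfl⟩
    have hstab_eq : ∀ k, k ∈ stab x ↔ k ∈ stab (τ x) := by
      intro k
      rw [mem_stab_iff', mem_stab_iff']
      constructor
      · intro hk
        rw [← hequiv, hk]
      · intro hk
        apply hbij.injective
        rw [hequiv]
        exact hk
    have hconj : ∀ k, k ∈ stab (shift x g) ↔ g * k * g⁻¹ ∈ stab x := by
      intro k
      rw [mem_stab_iff', mem_stab_iff', shift_shift', shift_eq_iff']
    have h1 : n ∈ stab (shift x g) := by
      rw [← hτx, ← hstab_eq]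
      exact (hstab n).mpr hn
    exact (hstab _).mp ((hconj n).mp h1)
  · -- Dedekind implies transitivity
    intro hN x y hy
    obtain ⟨g, rfl⟩ := hy
    classical
    have key : ∀ (c h h' : G), shift x h = shift x h' →
        shift x (c * h) = shift x (c * h') := by
      intro c h h' hh
      rw [shift_eq_iff'] at hh ⊢
      have hmem : h * h'⁻¹ ∈ stab x := hh
      have hc : c * (h * h'⁻¹) * c⁻¹ ∈ stab x := (hN (stab x)).conj_mem _ hmem c
      have e : c * h * (c * h')⁻¹ = c * (h * h'⁻¹) * c⁻¹ := by group
      rw [e]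
      exact hc
    have hLR : ∀ (c : G) (z : G → A), trans' x c⁻¹ (trans' x c z) = z := by
      intro c z
      by_cases hz : z ∈ orbit x
      · obtain ⟨m, rfl⟩ := hz
        rw [trans'_orbit x c (key c) m, trans'_orbit x c⁻¹ (key c⁻¹),
          inv_mul_cancel_left]
      · rw [trans'_not x c z hz, trans'_not x c⁻¹ z hz]
    refine ⟨trans' x g, ?_, ?_, ?_⟩
    · constructor
      · intro z w h
        have := congrArg (trans' x g⁻¹) h
        rwa [hLR, hLR] at this
      · intro w
        refine ⟨trans' x g⁻¹ w, ?_⟩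
        have := hLR g⁻¹ w
        rwa [inv_inv] at this
    · intro z k
      by_cases hz : z ∈ orbit x
      · obtain ⟨m, rfl⟩ := hz
        rw [shift_shift', trans'_orbit x g (key g), trans'_orbit x g (key g),
          shift_shift', mul_assoc]
      · rw [trans'_not x g z hz, trans'_not x g _ (orbit_shift_not_mem x z k hz)]
    · have := trans'_orbit x g (key g) 1
      rwa [mul_one, shift_one'] at this
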